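/- Let K be a field, 0 < d < m integers, A a d×m matrix over K of rank d, and B an (m−d)×m matrix over K of rank m−d such that A·Bᵀ = 0. Then for every subset I ⊆ {1,…,m} with complement J = {1,…,m} \ I, one has rk(B_I) + |J| = (m − d) + rk(A_J). -/
import Mathlib


open Matrix Module
set_option maxHeartbeats 1000000
set_option synthInstance.maxHeartbeats 400000
/-- The submatrix of `A` formed by the columns indexed by the subset `I`. -/
noncomputable def colSubmatrix {K : Type*} [Field K] {d m : ℕ}
    (A : Matrix (Fin d) (Fin m) K) (I : Finset (Fin m)) :
    Matrix (Fin d) {x : Fin m // x ∈ I} K :=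
  A.submatrix id (fun j => (j : Fin m))

lemma colSub_mulVec {K : Type*} [Field K] {d m : ℕ}
    (A : Matrix (Fin d) (Fin m) K) (J : Finset (Fin m)) (x : Fin m → K)
    (hx : ∀ i ∉ J, x i = 0) :
    (colSubmatrix A J) *ᵥ (fun j => x j.val) = A *ᵥ x := by
  funext i
  simp only [mulVec, dotProduct, colSubmatrix, submatrix_apply, id_eq]
  rw [Finset.sum_coe_sort J (fun j => A i j * x j)]
  exact Finset.sum_subset (Finset.subset_univ _) (fun j _ hj => by rw [hx j hj, mul_zero])

/-- Let `0 < d < m`, let `A` be a `d×m` matrix of rank `d` and `B` an `(m−d)×m` matrix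
of rank `m−d` over a field, with `A·Bᵀ = 0`. Then for every subset `I ⊆ {1,…,m}` with
complement `J`, one has `rk(B_I) + |J| = (m−d) + rk(A_J)`. -/
theorem rank_colSubmatrix_duality {K : Type*} [Field K] {d m : ℕ}
    (hd : 0 < d) (hdm : d < m)
    (A : Matrix (Fin d) (Fin m) K) (B : Matrix (Fin (m - d)) (Fin m) K)
    (hA : A.rank = d) (hB : B.rank = m - d) (hAB : A * Bᵀ = 0)
    (I : Finset (Fin m)) :
    (colSubmatrix B I).rank + Iᶜ.card = (m - d) + (colSubmatrix A Iᶜ).rank := by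
  classical
  set f := A.mulVecLin with hf
  -- finrank of ker f is m - d
  have hker : finrank K (LinearMap.ker f) = m - d := by
    have := LinearMap.finrank_range_add_finrank_ker f
    rw [Module.finrank_fintype_fun_eq_card, Fintype.card_fin] at this
    have hrA : finrank K (LinearMap.range f) = d := hA
    omega
  -- row space of B equals ker f
  have hrow : LinearMap.range (Bᵀ.mulVecLin) = LinearMap.ker f := by
    apply Submodule.eq_of_le_of_finrank_le
    · rintro x ⟨y, rfl⟩
      simp only [LinearMap.mem_ker, hf, mulVecLin_apply, mulVec_mulVec, hAB, zero_mulVec]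
    · have : finrank K (LinearMap.range (Bᵀ.mulVecLin)) = m - d := by
        have := Matrix.rank_transpose B
        rw [hB] at this
        exact this
      rw [this, hker]
  -- projection onto coordinates in I
  set π : (Fin m → K) →ₗ[K] ({x : Fin m // x ∈ I} → K) :=
    LinearMap.funLeft K K Subtype.val with hπ
  -- rank of B_I = finrank of π(ker f)
  have hBI : (colSubmatrix B I).rank = finrank K (Submodule.map π (LinearMap.ker f)) := by
    rw [← Matrix.rank_transpose (colSubmatrix B I)]
    have hcomp : (colSubmatrix B I)ᵀ.mulVecLin = π.comp (Bᵀ.mulVecLin) := by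
      ext y j
      rfl
    show finrank K (LinearMap.range (colSubmatrix B I)ᵀ.mulVecLin) = _
    rw [hcomp, LinearMap.range_comp, hrow]
  -- the restricted projection g
  set g : (LinearMap.ker f) →ₗ[K] ({x : Fin m // x ∈ I} → K) :=
    π.comp (LinearMap.ker f).subtype with hg
  have hrg : LinearMap.range g = Submodule.map π (LinearMap.ker f) := by
    rw [hg, LinearMap.range_comp, Submodule.range_subtype]
  -- rank-nullity for g
  have hrn1 : finrank K (Submodule.map π (LinearMap.ker f)) + finrank K (LinearMap.ker g)
      = m - d := by
    have := LinearMap.finrank_range_add_finrank_ker g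
    rw [hrg, hker] at this
    exact this
  have hkerg : ∀ z : LinearMap.ker f, z ∈ LinearMap.ker g ↔ ∀ i ∈ I, (z : Fin m → K) i = 0 := by
    intro z
    constructor
    · intro h i hi
      exact congrFun (show g z = 0 from h) ⟨i, hi⟩
    · intro h
      show g z = 0
      exact funext fun i => h i.val i.prop
  -- ker g is equivalent to ker of (A_{Iᶜ}).mulVecLin
  let E : LinearMap.ker g ≃ₗ[K] LinearMap.ker (colSubmatrix A Iᶜ).mulVecLin :=
    { toFun := fun z => ⟨fun j => ((z : LinearMap.ker f) : Fin m → K) j.val, by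
        show (colSubmatrix A Iᶜ) *ᵥ _ = 0
        rw [colSub_mulVec A Iᶜ _ (fun i hi => (hkerg z.1).mp z.2 i (by simpa using hi))]
        exact (z : LinearMap.ker f).2⟩
      map_add' := fun a b => rfl
      map_smul' := fun c a => rfl
      invFun := fun v => ⟨⟨fun i => if h : i ∈ I then 0 else v.val ⟨i, Finset.mem_compl.mpr h⟩, by
          show A *ᵥ _ = 0
          rw [← colSub_mulVec A Iᶜ _ (fun i hi => by simp [Finset.mem_compl] at hi; simp [hi])]
          have : (fun j : {x : Fin m // x ∈ Iᶜ} => dite (j.val ∈ I) (fun _ => (0:K))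
              (fun h => v.val ⟨j.val, Finset.mem_compl.mpr h⟩)) = v.val := by
            funext j
            rw [dif_neg (Finset.mem_compl.mp j.prop)]
          rw [this]
          exact v.2⟩, by
        rw [hkerg]
        intro i hi
        simp [hi]⟩
      left_inv := fun z => by
        apply Subtype.ext; apply Subtype.ext
        funext i
        by_cases h : i ∈ I
        · simp only [dif_pos h]
          exact ((hkerg z.1).mp z.2 i h).symm
        · simp only [dif_neg h]
      right_inv := fun v => by
        apply Subtype.ext
        funext j
        simp only
        rw [dif_neg (Finset.mem_compl.mp j.prop)] }
  have hE : finrank K (LinearMap.ker g) = finrank K (LinearMap.ker (colSubmatrix A Iᶜ).mulVecLin) :=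
    E.finrank_eq
  -- rank-nullity for A_{Iᶜ}
  have hrn2 : (colSubmatrix A Iᶜ).rank + finrank K (LinearMap.ker (colSubmatrix A Iᶜ).mulVecLin)
      = Iᶜ.card := by
    have := LinearMap.finrank_range_add_finrank_ker (colSubmatrix A Iᶜ).mulVecLin
    rwa [Module.finrank_fintype_fun_eq_card, Fintype.card_coe] at this
  omega
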